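/- Let n ≥ 2, let M be the n×n complex matrix with first column (2, a_1, …, a_{n-1})ᵀ and all other entries 0, and let t = πik for some integer k. Then exp(tM) = Id. -/

import Mathlib

open NormedSpace Nat

lemma exp_eq_one_of_sq_eq_smul {𝔸 : Type*} [NormedRing 𝔸] [NormedAlgebra ℂ 𝔸]
    [CompleteSpace 𝔸] (A : 𝔸) (c : ℂ) (hc : c ≠ 0) (hA : A * A = c • A)
    (hec : Complex.exp c = 1) : exp A = 1 := by
  have hpow : ∀ m : ℕ, A ^ (m + 1) = c ^ m • A := by
    intro m
    induction m with
    | zero => simp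
    | succ m ih =>
      rw [pow_succ, ih, smul_mul_assoc, hA, smul_smul, ← pow_succ]
  have hsum : Summable fun m : ℕ => ((m !) : ℂ)⁻¹ • A ^ m :=
    NormedSpace.expSeries_summable' (𝕂 := ℂ) A
  rw [exp_eq_tsum ℂ]
  show (∑' m : ℕ, ((m ! : ℂ))⁻¹ • A ^ m) = 1
  rw [Summable.tsum_eq_zero_add hsum]
  simp only [Nat.factorial_zero, Nat.cast_one, inv_one, pow_zero, one_smul]
  have h1 : ∀ m : ℕ, (((m + 1)! : ℂ))⁻¹ • A ^ (m + 1)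
      = (((m + 1)! : ℂ)⁻¹ * c ^ m) • A := by
    intro m; rw [hpow, smul_smul]
  have hcsum : Summable fun m : ℕ => ((m !) : ℂ)⁻¹ • c ^ m :=
    NormedSpace.expSeries_summable' (𝕂 := ℂ) c
  have hcsum' : Summable fun m : ℕ => ((m !) : ℂ)⁻¹ * c ^ m := by
    simpa [smul_eq_mul] using hcsum
  have hsum2 : Summable fun b : ℕ => (((b + 1)! : ℂ))⁻¹ * c ^ b := by
    have h := (((summable_nat_add_iff 1).mpr hcsum')).mul_left c⁻¹
    refine h.congr fun b => ?_
    rw [pow_succ]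
    field_simp
  simp only [h1]
  rw [Summable.tsum_smul_const hsum2]
  have hexp : Complex.exp c = ∑' m : ℕ, ((m !) : ℂ)⁻¹ * c ^ m := by
    rw [Complex.exp_eq_exp_ℂ, exp_eq_tsum ℂ]
    simp [smul_eq_mul]
  have h2 := Summable.tsum_eq_zero_add hcsum'
  rw [← hexp] at h2
  have hS : c * ∑' m : ℕ, (((m + 1)! : ℂ)⁻¹ * c ^ m) = Complex.exp c - 1 := by
    rw [← tsum_mul_left, eq_comm, sub_eq_iff_eq_add, h2]
    simp only [Nat.factorial_zero, Nat.cast_one, inv_one, pow_zero, mul_one]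
    rw [add_comm]
    congr 1
    exact tsum_congr fun m => by rw [pow_succ]; ring
  rw [hec, sub_self] at hS
  rcases mul_eq_zero.mp hS with h | h
  · exact absurd h hc
  · rw [h, zero_smul, add_zero]

/-- Let `n ≥ 2`, let `M` be the `n × n` complex matrix with first column
`(2, a₁, …, a_{n-1})ᵀ` and all other entries `0`, and let `t = π i k` for an integer `k`.
Then `exp (t • M) = Id`. -/
theorem stmt_2 (n : ℕ) (hn : 2 ≤ n) (M : Matrix (Fin n) (Fin n) ℂ)
    (h11 : M ⟨0, by omega⟩ ⟨0, by omega⟩ = 2)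
    (hcol : ∀ i j : Fin n, (j : ℕ) ≠ 0 → M i j = 0)
    (k : ℤ) (t : ℂ) (ht : t = Real.pi * Complex.I * k) :
    exp (t • M) = 1 := by
  letI : SeminormedRing (Matrix (Fin n) (Fin n) ℂ) := Matrix.linftyOpSemiNormedRing
  letI : NormedRing (Matrix (Fin n) (Fin n) ℂ) := Matrix.linftyOpNormedRing
  letI : NormedAlgebra ℂ (Matrix (Fin n) (Fin n) ℂ) := Matrix.linftyOpNormedAlgebra
  rcases eq_or_ne t 0 with h0 | h0
  · rw [h0, zero_smul, NormedSpace.exp_zero]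
  · have hM2 : M * M = (2 : ℂ) • M := by
      ext i j
      rw [Matrix.mul_apply, Matrix.smul_apply]
      rcases eq_or_ne (j : ℕ) 0 with hj | hj
      · have hj' : j = ⟨0, by omega⟩ := Fin.ext hj
        rw [hj', Finset.sum_eq_single (⟨0, by omega⟩ : Fin n)]
        · rw [h11, smul_eq_mul]; ring
        · intro b _ hb
          rw [hcol i b (fun h => hb (Fin.ext h)), zero_mul]
        · simp
      · rw [hcol i j hj]
        simp only [smul_eq_mul, mul_zero]
        apply Finset.sum_eq_zero
        intro b _
        rw [hcol b j hj, mul_zero]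
    have hA : (t • M) * (t • M) = (2 * t) • (t • M) := by
      rw [smul_mul_smul_comm, hM2, smul_smul, smul_smul]
      congr 1
      ring
    refine exp_eq_one_of_sq_eq_smul _ (2 * t) (by simpa using h0) hA ?_
    rw [ht]
    have : 2 * ((Real.pi : ℂ) * Complex.I * k) = k * (2 * Real.pi * Complex.I) := by
      ring
    rw [this, Complex.exp_int_mul_two_pi_mul_I]
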